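/- Suppose {a_n} is a sequence of nonnegative reals with a_n = 0 unless n is a power of q, and the formal Dirichlet-type series Σ_{r≥1} a_{q^r} t^r (with t = q^{-s}) equals a rational function f(t) having a pole of order b at t = q^{-a} and no poles with |t| ≤ q^{-a} otherwise (a > 0 real, b ≥ 1 integer). Then the partial sums satisfy Σ_{n≤X} a_n ≍ X^a (log X)^{b-1}, i.e., there exist positive constants c, C such that c X^a (log X)^{b-1} ≤ Σ_{n≤X} a_n ≤ C X^a (log X)^{b-1} for all sufficiently large X. -/

import Mathlib

open PowerSeries Polynomial Finset

namespace Taub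

lemma geom_sum_le_inv {x : ℝ} (h0 : 0 ≤ x) (h1 : x < 1) (n : ℕ) :
    ∑ i ∈ Finset.range n, x ^ i ≤ (1 - x)⁻¹ :=
  Summable.sum_le_tsum _ (fun i _ => by positivity)
    (summable_geometric_of_lt_one h0 h1) |>.trans_eq (tsum_geometric_of_lt_one h0 h1)

lemma coeff_mul_le (U V : PowerSeries ℂ) {M N ρ1 ρ0 : ℝ}
    (h1 : 0 < ρ1) (h12 : ρ1 < ρ0) (hM : 0 ≤ M) (hN : 0 ≤ N)
    (hU : ∀ n, ‖(PowerSeries.coeff n) U‖ ≤ M * ρ1⁻¹ ^ n)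
    (hV : ∀ n, ‖(PowerSeries.coeff n) V‖ ≤ N * ρ0⁻¹ ^ n) (n : ℕ) :
    ‖(PowerSeries.coeff n) (U * V)‖ ≤ (M * N * (1 - ρ1/ρ0)⁻¹) * ρ1⁻¹ ^ n := by
  have h0 : 0 < ρ0 := h1.trans h12
  have hy0 : 0 ≤ ρ1 / ρ0 := by positivity
  have hy1 : ρ1 / ρ0 < 1 := (div_lt_one h0).2 h12
  rw [PowerSeries.coeff_mul]
  calc ‖∑ p ∈ antidiagonal n, (PowerSeries.coeff p.1) U * (PowerSeries.coeff p.2) V‖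
      ≤ ∑ p ∈ antidiagonal n, ‖(PowerSeries.coeff p.1) U * (PowerSeries.coeff p.2) V‖ :=
        norm_sum_le _ _
    _ ≤ ∑ p ∈ antidiagonal n, (M * ρ1⁻¹ ^ p.1) * (N * ρ0⁻¹ ^ p.2) := by
        refine Finset.sum_le_sum fun p _ => ?_
        rw [norm_mul]
        exact mul_le_mul (hU p.1) (hV p.2) (norm_nonneg _) (by positivity)
    _ = ∑ k ∈ range (n+1), (M * ρ1⁻¹ ^ k) * (N * ρ0⁻¹ ^ (n - k)) := by
        rw [Finset.Nat.sum_antidiagonal_eq_sum_range_succ_mk]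
    _ ≤ (M * N * (1 - ρ1/ρ0)⁻¹) * ρ1⁻¹ ^ n := by
        have key : ∀ k ∈ range (n+1),
            (M * ρ1⁻¹ ^ k) * (N * ρ0⁻¹ ^ (n - k)) =
            (M * N * ρ1⁻¹ ^ n) * (ρ1/ρ0) ^ (n - k) := by
          intro k hk
          have hk' : k + (n - k) = n := Nat.add_sub_cancel' (Nat.lt_succ_iff.1 (mem_range.1 hk))
          have : ρ1⁻¹ ^ n = ρ1⁻¹ ^ k * ρ1⁻¹ ^ (n - k) := by rw [← pow_add, hk']
          rw [this, div_pow]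
          field_simp
          rw [mul_assoc, ← mul_pow, one_div, inv_mul_cancel₀ h0.ne', one_pow, mul_one, mul_assoc, ← mul_pow, one_div,
            inv_mul_cancel₀ h1.ne', one_pow, mul_one]
        rw [Finset.sum_congr rfl key, ← Finset.mul_sum]
        have hsum : ∑ k ∈ range (n+1), (ρ1/ρ0) ^ (n - k) ≤ (1 - ρ1/ρ0)⁻¹ := by
          have := Finset.sum_range_reflect (fun k => (ρ1/ρ0) ^ k) (n+1)
          simp only [Nat.add_sub_cancel] at this
          rw [this]
          exact geom_sum_le_inv hy0 hy1 (n+1)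
        calc (M * N * ρ1⁻¹ ^ n) * ∑ k ∈ range (n+1), (ρ1/ρ0) ^ (n - k)
            ≤ (M * N * ρ1⁻¹ ^ n) * (1 - ρ1/ρ0)⁻¹ := by
              refine mul_le_mul_of_nonneg_left hsum (by positivity)
          _ = (M * N * (1 - ρ1/ρ0)⁻¹) * ρ1⁻¹ ^ n := by ring

end Taub
namespace Taub

noncomputable def linInv (z : ℂ) : PowerSeries ℂ := PowerSeries.mk fun n => -(z⁻¹ ^ (n+1))

lemma linInv_mul (z : ℂ) (hz : z ≠ 0) :
    ((Polynomial.X - Polynomial.C z : Polynomial ℂ) : PowerSeries ℂ) * linInv z = 1 := by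
  have hc : ((Polynomial.X - Polynomial.C z : Polynomial ℂ) : PowerSeries ℂ) =
      PowerSeries.X - PowerSeries.C z := by
    push_cast; ring
  rw [hc, sub_mul]
  ext n
  cases n with
  | zero =>
      rw [map_sub, PowerSeries.coeff_zero_X_mul, PowerSeries.coeff_C_mul]
      simp [linInv, hz]
  | succ m =>
      rw [map_sub, PowerSeries.coeff_succ_X_mul, PowerSeries.coeff_C_mul]
      simp only [linInv, PowerSeries.coeff_mk, PowerSeries.coeff_one, Nat.succ_ne_zero, if_false]
      rw [pow_succ']
      field_simp
      rw [show m + 1 + 1 = 2 + m by ring, pow_add, ← mul_assoc, ← mul_pow, mul_one_div_cancel hz, one_pow, one_mul,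
        mul_zero, sub_neg_eq_add, neg_add_cancel]
  
lemma linInv_coeff_le {z : ℂ} {ρ0 : ℝ} (h0 : 0 < ρ0) (hz : ρ0 ≤ ‖z‖) (n : ℕ) :
    ‖(PowerSeries.coeff n) (linInv z)‖ ≤ ρ0⁻¹ * ρ0⁻¹ ^ n := by
  have hz0 : (0:ℝ) < ‖z‖ := h0.trans_le hz
  have h1 : ‖(PowerSeries.coeff n) (linInv z)‖ = ‖z‖⁻¹ ^ (n+1) := by
    simp [linInv]
  have h2 : ρ0⁻¹ * ρ0⁻¹ ^ n = ρ0⁻¹ ^ (n+1) := by ring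
  rw [h1, h2]
  exact pow_le_pow_left₀ (by positivity) (inv_anti₀ h0 hz) _
lemma prod_linInv {ρ0 ρ1 : ℝ} (h1 : 0 < ρ1) (h12 : ρ1 < ρ0) (m : Multiset ℂ)
    (hm : ∀ z ∈ m, ρ0 ≤ ‖z‖) :
    ∃ (V : PowerSeries ℂ) (M : ℝ), 0 < M ∧
      (((m.map fun z => (Polynomial.X - Polynomial.C z : Polynomial ℂ)).prod :
        Polynomial ℂ) : PowerSeries ℂ) * V = 1 ∧
      ∀ n, ‖(PowerSeries.coeff n) V‖ ≤ M * ρ1⁻¹ ^ n := by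
  have h0 : 0 < ρ0 := h1.trans h12
  induction m using Multiset.induction_on with
  | empty =>
      refine ⟨1, 1, one_pos, by simp, fun n => ?_⟩
      rw [PowerSeries.coeff_one]
      split
      · simp_all
      · simp only [norm_zero]; positivity
  | cons z s ih =>
      obtain ⟨V, M, hM, hVe, hVb⟩ := ih fun w hw => hm w (Multiset.mem_cons_of_mem hw)
      have hz : ρ0 ≤ ‖z‖ := hm z (Multiset.mem_cons_self z s)
      have hzne : z ≠ 0 := by
        intro h; rw [h] at hz; simp at hz; exact absurd hz (not_le.2 h0)
      refine ⟨V * linInv z, M * ρ0⁻¹ * (1 - ρ1/ρ0)⁻¹, ?_, ?_, ?_⟩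
      · have hy1 : ρ1/ρ0 < 1 := (div_lt_one h0).2 h12
        have : 0 < 1 - ρ1/ρ0 := by linarith
        positivity
      · rw [Multiset.map_cons, Multiset.prod_cons, Polynomial.coe_mul]
        calc ((Polynomial.X - Polynomial.C z : Polynomial ℂ) : PowerSeries ℂ) *
              ((((s.map fun z => (Polynomial.X - Polynomial.C z : Polynomial ℂ)).prod :
                Polynomial ℂ) : PowerSeries ℂ)) * (V * linInv z)
            = (((Polynomial.X - Polynomial.C z : Polynomial ℂ) : PowerSeries ℂ) * linInv z) *
              ((((s.map fun z => (Polynomial.X - Polynomial.C z : Polynomial ℂ)).prod :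
                Polynomial ℂ) : PowerSeries ℂ) * V) := by ring
          _ = 1 := by rw [linInv_mul z hzne, hVe, one_mul]
      · intro n
        exact coeff_mul_le V (linInv z) h1 h12 hM.le (by positivity) hVb
          (linInv_coeff_le h0 hz) n
lemma poly_inv_bound (Q1 : Polynomial ℂ) (hQ1 : Q1 ≠ 0) {ρ0 ρ1 : ℝ}
    (h1 : 0 < ρ1) (h12 : ρ1 < ρ0)
    (hroots : ∀ z ∈ Q1.roots, ρ0 ≤ ‖z‖) :
    ∃ (V : PowerSeries ℂ) (M : ℝ), 0 < M ∧ (Q1 : PowerSeries ℂ) * V = 1 ∧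
      ∀ n, ‖(PowerSeries.coeff n) V‖ ≤ M * ρ1⁻¹ ^ n := by
  obtain ⟨V0, M, hM, hVe, hVb⟩ := prod_linInv h1 h12 Q1.roots hroots
  have hsplit := (IsAlgClosed.splits Q1).eq_prod_roots
  have hcne : Q1.leadingCoeff ≠ 0 := Polynomial.leadingCoeff_ne_zero.2 hQ1
  have hnorm : 0 < ‖Q1.leadingCoeff⁻¹‖ := norm_pos_iff.2 (inv_ne_zero hcne)
  have hcast : (Q1 : PowerSeries ℂ) = PowerSeries.C Q1.leadingCoeff *
      (((Q1.roots.map fun z => (Polynomial.X - Polynomial.C z : Polynomial ℂ)).prod :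
        Polynomial ℂ) : PowerSeries ℂ) := by
    conv_lhs => rw [hsplit]
    rw [Polynomial.coe_mul, Polynomial.coe_C]
  refine ⟨PowerSeries.C Q1.leadingCoeff⁻¹ * V0, ‖Q1.leadingCoeff⁻¹‖ * M,
    mul_pos hnorm hM, ?_, ?_⟩
  · rw [hcast]
    calc PowerSeries.C Q1.leadingCoeff *
          (((Q1.roots.map fun z => (Polynomial.X - Polynomial.C z : Polynomial ℂ)).prod :
            Polynomial ℂ) : PowerSeries ℂ) * (PowerSeries.C Q1.leadingCoeff⁻¹ * V0)
        = (PowerSeries.C Q1.leadingCoeff * PowerSeries.C Q1.leadingCoeff⁻¹) *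
          ((((Q1.roots.map fun z => (Polynomial.X - Polynomial.C z : Polynomial ℂ)).prod :
            Polynomial ℂ) : PowerSeries ℂ) * V0) := by ring
      _ = 1 := by rw [hVe, ← map_mul, mul_inv_cancel₀ hcne]; simp
  · intro n
    rw [PowerSeries.coeff_C_mul, norm_mul, mul_assoc]
    exact mul_le_mul_of_nonneg_left (hVb n) (norm_nonneg _)

lemma map_coe (p : Polynomial ℝ) :
    PowerSeries.map (algebraMap ℝ ℂ) (p : PowerSeries ℝ) =
      ((p.map (algebraMap ℝ ℂ) : Polynomial ℂ) : PowerSeries ℂ) := by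
  ext n
  simp [PowerSeries.coeff_map, Polynomial.coeff_coe, Polynomial.coeff_map]

lemma g_bound {g : PowerSeries ℝ} {P Q1 : Polynomial ℝ} (hQ1 : Q1 ≠ 0)
    {ρ0 ρ1 : ℝ} (h1 : 0 < ρ1) (h12 : ρ1 < ρ0)
    (hroots : ∀ z ∈ (Q1.map (algebraMap ℝ ℂ)).roots, ρ0 ≤ ‖z‖)
    (hg : g * (Q1 : PowerSeries ℝ) = (P : PowerSeries ℝ)) :
    ∃ Mg : ℝ, 0 < Mg ∧ ∀ j, |PowerSeries.coeff j g| ≤ Mg * ρ1⁻¹ ^ j := by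
  have hinj : Function.Injective (algebraMap ℝ ℂ) := (algebraMap ℝ ℂ).injective
  have hQ1c : Q1.map (algebraMap ℝ ℂ) ≠ 0 := (Polynomial.map_ne_zero_iff hinj).2 hQ1
  obtain ⟨V, M, hM, hVe, hVb⟩ := poly_inv_bound _ hQ1c h1 h12 hroots
  have hgc : (PowerSeries.map (algebraMap ℝ ℂ) g) *
      ((Q1.map (algebraMap ℝ ℂ) : Polynomial ℂ) : PowerSeries ℂ) =
      ((P.map (algebraMap ℝ ℂ) : Polynomial ℂ) : PowerSeries ℂ) := by
    rw [← map_coe, ← map_coe, ← map_mul, hg]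
  have hid : PowerSeries.map (algebraMap ℝ ℂ) g =
      ((P.map (algebraMap ℝ ℂ) : Polynomial ℂ) : PowerSeries ℂ) * V := by
    calc PowerSeries.map (algebraMap ℝ ℂ) g
        = PowerSeries.map (algebraMap ℝ ℂ) g *
          (((Q1.map (algebraMap ℝ ℂ) : Polynomial ℂ) : PowerSeries ℂ) * V) := by
          rw [hVe, mul_one]
      _ = (PowerSeries.map (algebraMap ℝ ℂ) g *
          ((Q1.map (algebraMap ℝ ℂ) : Polynomial ℂ) : PowerSeries ℂ)) * V := by ring
      _ = _ := by rw [hgc]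
  set d := P.natDegree with hd
  set SP := ∑ u ∈ range (d+1), |P.coeff u| * ρ1 ^ u with hSPdef
  have hSP : 0 ≤ SP := Finset.sum_nonneg fun i _ => by positivity
  have hSPle : ∀ k : ℕ, ∑ u ∈ range k, |P.coeff u| * ρ1 ^ u ≤ SP := by
    intro k
    have hsub : ∑ u ∈ range (max k (d+1)), |P.coeff u| * ρ1 ^ u = SP := by
      rw [hSPdef]
      exact (Finset.sum_subset (Finset.range_subset_range.2 (le_max_right _ _))
        (fun x _ hx => by
          have : d < x := by
            have := Finset.mem_range.not.1 hx; omega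
          rw [Polynomial.coeff_eq_zero_of_natDegree_lt this]; simp)).symm
    calc ∑ u ∈ range k, |P.coeff u| * ρ1 ^ u
        ≤ ∑ u ∈ range (max k (d+1)), |P.coeff u| * ρ1 ^ u :=
          Finset.sum_le_sum_of_subset_of_nonneg
            (Finset.range_subset_range.2 (le_max_left _ _)) (fun i _ _ => by positivity)
      _ = SP := hsub
  refine ⟨M * SP + 1, by nlinarith, fun j => ?_⟩
  have habs : |PowerSeries.coeff j g| =
      ‖(PowerSeries.coeff j) (PowerSeries.map (algebraMap ℝ ℂ) g)‖ := by
    simp [PowerSeries.coeff_map]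
  rw [habs, hid, PowerSeries.coeff_mul]
  calc ‖∑ p ∈ antidiagonal j, (PowerSeries.coeff p.1)
          ((P.map (algebraMap ℝ ℂ) : Polynomial ℂ) : PowerSeries ℂ) *
          (PowerSeries.coeff p.2) V‖
      ≤ ∑ p ∈ antidiagonal j, |P.coeff p.1| * (M * ρ1⁻¹ ^ p.2) := by
        refine (norm_sum_le _ _).trans (Finset.sum_le_sum fun p _ => ?_)
        rw [norm_mul]
        have h1' : ‖(PowerSeries.coeff p.1)
            ((P.map (algebraMap ℝ ℂ) : Polynomial ℂ) : PowerSeries ℂ)‖ = |P.coeff p.1| := by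
          simp [Polynomial.coeff_coe, Polynomial.coeff_map]
        rw [h1']
        exact mul_le_mul_of_nonneg_left (hVb p.2) (abs_nonneg _)
    _ = ∑ u ∈ range (j+1), |P.coeff u| * (M * ρ1⁻¹ ^ (j - u)) := by
        rw [Finset.Nat.sum_antidiagonal_eq_sum_range_succ_mk]
    _ = (M * ρ1⁻¹ ^ j) * ∑ u ∈ range (j+1), |P.coeff u| * ρ1 ^ u := by
        rw [Finset.mul_sum]
        refine Finset.sum_congr rfl fun u hu => ?_
        have hu' : u + (j - u) = j := Nat.add_sub_cancel' (Nat.lt_succ_iff.1 (mem_range.1 hu))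
        have : ρ1⁻¹ ^ j = ρ1⁻¹ ^ u * ρ1⁻¹ ^ (j - u) := by rw [← pow_add, hu']
        rw [this]
        field_simp
        rw [mul_assoc, ← mul_pow, one_div, inv_mul_cancel₀ h1.ne', one_pow, mul_one]
    _ ≤ (M * ρ1⁻¹ ^ j) * SP := by
        exact mul_le_mul_of_nonneg_left (hSPle (j+1)) (by positivity)
    _ ≤ (M * SP + 1) * ρ1⁻¹ ^ j := by
        have : 0 ≤ ρ1⁻¹ ^ j := by positivity
        nlinarith
noncomputable def binv (u : ℝ) : PowerSeries ℝ := PowerSeries.mk fun n => u ^ (n+1)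

lemma binv_mul {t0 u : ℝ} (h : t0 * u = 1) :
    (PowerSeries.C t0 - PowerSeries.X) * binv u = 1 := by
  rw [sub_mul]
  ext n
  cases n with
  | zero =>
      rw [map_sub, PowerSeries.coeff_zero_X_mul, PowerSeries.coeff_C_mul]
      simp [binv, h]
  | succ m =>
      rw [map_sub, PowerSeries.coeff_succ_X_mul, PowerSeries.coeff_C_mul]
      simp only [binv, PowerSeries.coeff_mk, PowerSeries.coeff_one, Nat.succ_ne_zero, if_false]
      have : t0 * u ^ (m + 1 + 1) = u ^ (m+1) := by
        rw [pow_succ']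
        rw [← mul_assoc, h, one_mul]
      rw [this, sub_self]

lemma coeff_binv_pow (u : ℝ) (k : ℕ) (n : ℕ) :
    PowerSeries.coeff n ((binv u) ^ (k+1)) = ((n + k).choose k : ℝ) * u ^ (n + (k+1)) := by
  induction k generalizing n with
  | zero => simp [binv]
  | succ k ih =>
      rw [pow_succ, PowerSeries.coeff_mul, Finset.Nat.sum_antidiagonal_eq_sum_range_succ_mk]
      have hterm : ∀ i ∈ range (n+1),
          PowerSeries.coeff i ((binv u) ^ (k+1)) * PowerSeries.coeff (n - i) (binv u) =
          ((i + k).choose k : ℝ) * u ^ (n + (k+2)) := by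
        intro i hi
        have hi' : i ≤ n := Nat.lt_succ_iff.1 (mem_range.1 hi)
        rw [ih i]
        simp only [binv, PowerSeries.coeff_mk]
        rw [mul_assoc, ← pow_add]
        congr 2
        omega
      rw [Finset.sum_congr rfl hterm, ← Finset.sum_mul]
      rw [show ∑ i ∈ range (n+1), ((i + k).choose k : ℝ) =
        (((n + k + 1).choose (k + 1) : ℕ) : ℝ) by
          rw [← Nat.cast_sum]
          norm_cast
          exact Nat.sum_range_add_choose n k]
      norm_cast
lemma choose_add_le (k : ℕ) : ∀ (j s : ℕ),
    (s + j + k + 1).choose (k+1) ≤ (s + k + 1).choose (k+1) + j * (s + j + k).choose k := by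
  intro j
  induction j with
  | zero => intro s; simp
  | succ j ih =>
      intro s
      have h1 : s + (j+1) + k + 1 = (s+1) + j + k + 1 := by omega
      rw [h1]
      calc ((s+1) + j + k + 1).choose (k+1)
          ≤ ((s+1) + k + 1).choose (k+1) + j * ((s+1) + j + k).choose k := ih (s+1)
        _ = (s + k + 1).choose (k+1) + (s + k + 1).choose k + j * ((s+1) + j + k).choose k := by
            rw [show (s+1) + k + 1 = (s + k + 1) + 1 by omega, Nat.choose_succ_succ']; omega
        _ ≤ (s + k + 1).choose (k+1) + (s + (j+1) + k).choose k
            + j * (s + (j+1) + k).choose k := by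
            have h2 : (s + k + 1).choose k ≤ (s + (j+1) + k).choose k :=
              Nat.choose_le_choose k (by omega)
            have h3 : ((s+1) + j + k) = (s + (j+1) + k) := by omega
            rw [h3]; omega
        _ = (s + k + 1).choose (k+1) + (j+1) * (s + (j+1) + k).choose k := by ring

lemma key_binom {k r j : ℕ} (hj : j ≤ r) :
    r * (r + k + 1).choose (k+1) ≤
      r * ((r - j) + k + 1).choose (k+1) + j * ((k+1) * (r + k + 1).choose (k+1)) := by
  have h1 : (r + k + 1).choose (k+1) ≤ ((r-j) + k + 1).choose (k+1) + j * (r + k).choose k := by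
    have := choose_add_le k j (r - j)
    rwa [show (r-j) + j + k + 1 = r + k + 1 by omega, show (r-j) + j + k = r + k by omega] at this
  have h2 : (r + k + 1) * (r + k).choose k = (r + k + 1).choose (k+1) * (k+1) :=
    Nat.add_one_mul_choose_eq (r+k) k
  have h3 : r * (r + k).choose k ≤ (k+1) * (r + k + 1).choose (k+1) := by
    calc r * (r + k).choose k ≤ (r + k + 1) * (r + k).choose k :=
          Nat.mul_le_mul_right _ (by omega)
      _ = (k+1) * (r + k + 1).choose (k+1) := by rw [h2]; ring
  calc r * (r + k + 1).choose (k+1)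
      ≤ r * (((r-j) + k + 1).choose (k+1) + j * (r + k).choose k) :=
        Nat.mul_le_mul_left _ h1
    _ = r * ((r-j) + k + 1).choose (k+1) + j * (r * (r + k).choose k) := by ring
    _ ≤ _ := by
        have := Nat.mul_le_mul_left j h3
        omega

lemma pow_le_fact_mul_choose (k r : ℕ) : r ^ k ≤ k.factorial * (r + k).choose k := by
  calc r ^ k ≤ (r + 1) ^ k := Nat.pow_le_pow_left (by omega) k
    _ = ((r + k) + 1 - k) ^ k := by congr 1; omega
    _ ≤ (r + k).descFactorial k := Nat.pow_sub_le_descFactorial (r+k) k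
    _ = k.factorial * (r + k).choose k := Nat.descFactorial_eq_factorial_mul_choose _ _

lemma choose_le_pow' (k r : ℕ) : (r + k).choose k ≤ (r + k) ^ k := by
  calc (r + k).choose k ≤ k.factorial * (r + k).choose k := Nat.le_mul_of_pos_left _ k.factorial_pos
    _ = (r + k).descFactorial k := (Nat.descFactorial_eq_factorial_mul_choose _ _).symm
    _ ≤ (r + k) ^ k := Nat.descFactorial_le_pow _ _
lemma key_binom' {k r j : ℕ} (hj : j ≤ r) :
    r * (r + k).choose k ≤ r * ((r - j) + k).choose k + j * (k * (r + k).choose k) := by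
  cases k with
  | zero => simp
  | succ k =>
      have h := key_binom (k := k) hj
      rw [show r + k + 1 = r + (k+1) by omega, show r - j + k + 1 = r - j + (k+1) by omega] at h
      exact h

lemma key_binom_real {k r j : ℕ} (hj : j ≤ r) (hr : 1 ≤ r) :
    ((r + k).choose k : ℝ) - (((r - j) + k).choose k : ℝ) ≤
      (j : ℝ) * k * ((r + k).choose k) / r := by
  have h := key_binom' (k := k) hj
  have hc : ((r : ℝ)) * ((r + k).choose k : ℝ) ≤
      (r : ℝ) * (((r - j) + k).choose k : ℝ) + (j : ℝ) * ((k : ℝ) * ((r + k).choose k : ℝ)) := by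
    exact_mod_cast h
  have hr' : (0:ℝ) < r := by exact_mod_cast hr
  rw [le_div_iff₀ hr']
  nlinarith [hc]
 
lemma main_tendsto (k : ℕ) (w : ℕ → ℝ) (Mw θ : ℝ) (hθ0 : 0 ≤ θ) (hθ1 : θ < 1)
    (hMw : 0 < Mw) (hw : ∀ j, |w j| ≤ Mw * θ ^ j) :
    Filter.Tendsto (fun r : ℕ =>
      (∑ j ∈ range (r+1), w j * (((r - j) + k).choose k : ℝ)) / (((r+k).choose k : ℝ)))
      Filter.atTop (nhds (∑' j, w j)) := by
  have hgeo : Summable (fun j : ℕ => Mw * θ ^ j) :=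
    (summable_geometric_of_lt_one hθ0 hθ1).mul_left Mw
  have hsum : Summable w := by
    refine Summable.of_norm_bounded hgeo fun j => ?_
    simpa [Real.norm_eq_abs] using hw j
  have hjgeo : Summable (fun j : ℕ => (j:ℝ) * θ ^ j) := by
    have := summable_pow_mul_geometric_of_norm_lt_one (R := ℝ) 1
      (r := θ) (by rwa [Real.norm_eq_abs, abs_of_nonneg hθ0])
    simpa using this
  set K0 := ∑' j : ℕ, (j:ℝ) * θ ^ j with hK0def
  have hK0 : 0 ≤ K0 := tsum_nonneg fun j => by positivity
  set G := ∑' j, w j with hGdef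
  have hB : ∀ r : ℕ, (0:ℝ) < ((r+k).choose k : ℝ) := by
    intro r
    exact_mod_cast Nat.choose_pos (by omega)
  have h1θ : (0:ℝ) < 1 - θ := by linarith
  -- key error bound
  have key : ∀ r : ℕ, 1 ≤ r →
      |(∑ j ∈ range (r+1), w j * (((r - j) + k).choose k : ℝ)) / (((r+k).choose k : ℝ)) - G|
        ≤ Mw * K0 * k / r + (Mw / (1 - θ)) * θ ^ r := by
    intro r hr
    have hrR : (0:ℝ) < r := by exact_mod_cast hr
    set B := ((r+k).choose k : ℝ) with hBdef
    have hBpos := hB r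
    have htail : |∑' j : ℕ, w (j + (r+1))| ≤ (Mw / (1 - θ)) * θ ^ (r+1) := by
      have hsa : Summable (fun j : ℕ => Mw * θ ^ (j + (r+1))) := by
        refine ((summable_geometric_of_lt_one hθ0 hθ1).mul_left (Mw * θ ^ (r+1))).congr
          fun j => ?_
        rw [pow_add]; ring
      have habs : Summable (fun j : ℕ => |w (j + (r+1))|) :=
        Summable.of_nonneg_of_le (fun j => abs_nonneg _) (fun j => hw _) hsa
      have h2a : |∑' j : ℕ, w (j + (r+1))| ≤ ∑' j : ℕ, |w (j + (r+1))| := by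
        simpa [Real.norm_eq_abs] using
          norm_tsum_le_tsum_norm (f := fun j : ℕ => w (j + (r+1)))
            (by simpa [Real.norm_eq_abs] using habs)
      have h2b : ∑' j : ℕ, |w (j + (r+1))| ≤ ∑' j : ℕ, Mw * θ ^ (j + (r+1)) :=
        Summable.tsum_le_tsum (fun j => hw _) habs hsa
      have h2 : |∑' j : ℕ, w (j + (r+1))| ≤ ∑' j : ℕ, Mw * θ ^ (j + (r+1)) := h2a.trans h2b
      have h3 : ∑' j : ℕ, Mw * θ ^ (j + (r+1)) = (Mw * θ ^ (r+1)) * (1-θ)⁻¹ := by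
        have : ∀ j : ℕ, Mw * θ ^ (j + (r+1)) = (Mw * θ ^ (r+1)) * θ ^ j := by
          intro j; rw [pow_add]; ring
        rw [tsum_congr this, tsum_mul_left, tsum_geometric_of_lt_one hθ0 hθ1]
      rw [h3] at h2
      calc |∑' j : ℕ, w (j + (r+1))| ≤ (Mw * θ ^ (r+1)) * (1-θ)⁻¹ := h2
        _ = (Mw / (1 - θ)) * θ ^ (r+1) := by ring
    have hsplit : (∑ j ∈ range (r+1), w j * (((r - j) + k).choose k : ℝ)) - G * B
        = (∑ j ∈ range (r+1), w j * ((((r - j) + k).choose k : ℝ) - B))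
          - (∑' j : ℕ, w (j + (r+1))) * B := by
      have h := Summable.sum_add_tsum_nat_add (f := w) (r+1) hsum
      have htl : (∑' j : ℕ, w (j + (r+1))) = G - ∑ j ∈ range (r+1), w j := by
        rw [hGdef]; linarith
      rw [htl]
      simp only [mul_sub]
      rw [Finset.sum_sub_distrib, ← Finset.sum_mul]
      ring
    have hmain : |∑ j ∈ range (r+1), w j * ((((r - j) + k).choose k : ℝ) - B)|
        ≤ (Mw * K0 * k / r) * B := by
      calc |∑ j ∈ range (r+1), w j * ((((r - j) + k).choose k : ℝ) - B)|
          ≤ ∑ j ∈ range (r+1), |w j * ((((r - j) + k).choose k : ℝ) - B)| :=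
            Finset.abs_sum_le_sum_abs _ _
        _ ≤ ∑ j ∈ range (r+1), (Mw * θ ^ j) * ((j:ℝ) * k * B / r) := by
            refine Finset.sum_le_sum fun j hj => ?_
            have hjr : j ≤ r := Nat.lt_succ_iff.1 (mem_range.1 hj)
            have hmono : (((r - j) + k).choose k : ℝ) ≤ B := by
              rw [hBdef]; exact_mod_cast Nat.choose_le_choose k (by omega)
            rw [abs_mul, abs_of_nonpos (sub_nonpos.2 hmono), neg_sub]
            refine mul_le_mul (hw j) ?_ (by linarith) (by positivity)
            exact key_binom_real hjr hr
        _ = (Mw * k * B / r) * ∑ j ∈ range (r+1), (j:ℝ) * θ ^ j := by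
            rw [Finset.mul_sum]; refine Finset.sum_congr rfl fun j hj => by ring
        _ ≤ (Mw * k * B / r) * K0 := by
            refine mul_le_mul_of_nonneg_left ?_ (by positivity)
            exact Summable.sum_le_tsum _ (fun j _ => by positivity) hjgeo
        _ = (Mw * K0 * k / r) * B := by ring
    have hq : (∑ j ∈ range (r+1), w j * (((r - j) + k).choose k : ℝ)) / B - G
        = ((∑ j ∈ range (r+1), w j * (((r - j) + k).choose k : ℝ)) - G * B) / B := by
      rw [sub_div, mul_div_cancel_right₀ _ hBpos.ne']
    rw [hq, abs_div, abs_of_pos hBpos, div_le_iff₀ hBpos]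
    calc |(∑ j ∈ range (r+1), w j * (((r - j) + k).choose k : ℝ)) - G * B|
        ≤ (Mw * K0 * k / r) * B + (Mw / (1 - θ)) * θ ^ (r+1) * B := by
          rw [hsplit]
          refine (abs_sub _ _).trans ?_
          gcongr
          rw [abs_mul, abs_of_pos hBpos]
          exact mul_le_mul_of_nonneg_right htail hBpos.le
      _ ≤ (Mw * K0 * k / r + (Mw / (1 - θ)) * θ ^ r) * B := by
          have hθr : θ ^ (r+1) ≤ θ ^ r := by
            rw [pow_succ]
            nlinarith [pow_nonneg hθ0 r]
          have : (Mw / (1 - θ)) * θ ^ (r+1) ≤ (Mw / (1 - θ)) * θ ^ r :=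
            mul_le_mul_of_nonneg_left hθr (by positivity)
          nlinarith
  -- conclude
  have heps : Filter.Tendsto (fun r : ℕ => Mw * K0 * k / r + (Mw / (1 - θ)) * θ ^ r)
      Filter.atTop (nhds 0) := by
    have h1 : Filter.Tendsto (fun r : ℕ => Mw * K0 * k / r) Filter.atTop (nhds 0) :=
      tendsto_const_div_atTop_nhds_zero_nat _
    have h2 : Filter.Tendsto (fun r : ℕ => (Mw / (1 - θ)) * θ ^ r) Filter.atTop (nhds 0) := by
      have := tendsto_pow_atTop_nhds_zero_of_lt_one hθ0 hθ1
      simpa using this.const_mul (Mw / (1 - θ))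
    simpa using h1.add h2
  have hzero : Filter.Tendsto (fun r : ℕ =>
      (∑ j ∈ range (r+1), w j * (((r - j) + k).choose k : ℝ)) / (((r+k).choose k : ℝ)) - G)
      Filter.atTop (nhds 0) := by
    refine squeeze_zero_norm' ?_ heps
    filter_upwards [Filter.eventually_ge_atTop 1] with r hr
    simpa [Real.norm_eq_abs] using key r hr
  have := hzero.add (tendsto_const_nhds (x := G))
  simpa using this
lemma exists_root_lb (t0 : ℝ) (m : Multiset ℂ) (hm : ∀ z ∈ m, t0 < ‖z‖) :
    ∃ ρ0, t0 < ρ0 ∧ ∀ z ∈ m, ρ0 ≤ ‖z‖ := by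
  induction m using Multiset.induction_on with
  | empty => exact ⟨t0 + 1, by linarith, by simp⟩
  | cons z s ih =>
      obtain ⟨ρ0, h1, h2⟩ := ih fun w hw => hm w (Multiset.mem_cons_of_mem hw)
      have hz : t0 < ‖z‖ := hm z (Multiset.mem_cons_self z s)
      refine ⟨min ρ0 ((t0 + ‖z‖)/2), lt_min h1 (by linarith), fun w hw => ?_⟩
      rcases Multiset.mem_cons.1 hw with h | h
      · subst h; exact (min_le_right _ _).trans (by linarith)
      · exact (min_le_left _ _).trans (h2 w h)

lemma sum_pow_sub_le {x : ℝ} (h0 : 0 ≤ x) (h1 : x < 1) (R : ℕ) :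
    ∑ r ∈ range (R+1), x ^ (R - r) ≤ (1 - x)⁻¹ := by
  have h := Finset.sum_range_reflect (fun i => x ^ i) (R+1)
  simp only [Nat.add_sub_cancel] at h
  rw [h]
  exact geom_sum_le_inv h0 h1 (R+1)

end Taub

open scoped BigOperators
open Taub

/-- Tauberian lemma: if `{a_n}` is supported on powers of `q`, and the generating
series `Σ_{r} a_{q^r} t^r` is a rational function `P/Q` of `t = q^{-s}` with a pole
of order `b` at `t = q^{-A}` and no other poles in `|t| ≤ q^{-A}`, then
`Σ_{n ≤ X} a_n ≍ X^A (log X)^{b-1}`. -/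
theorem tauberian_powers_of_q (q : ℕ) (hq : 2 ≤ q) (a : ℕ → ℝ) (ha : ∀ n, 0 ≤ a n)
    (hsupp : ∀ n, (¬ ∃ r : ℕ, 1 ≤ r ∧ n = q ^ r) → a n = 0)
    (A : ℝ) (hA : 0 < A) (b : ℕ) (hb : 1 ≤ b)
    (P Q : Polynomial ℝ) (hcop : IsCoprime P Q) (hQ0 : Q.coeff 0 ≠ 0)
    (hrat : (PowerSeries.mk fun r => a (q ^ r)) * (Q : PowerSeries ℝ) =
      (P : PowerSeries ℝ))
    (hpole : Polynomial.rootMultiplicity ((((q : ℝ) ^ (-A) : ℝ)) : ℂ)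
      (Q.map (algebraMap ℝ ℂ)) = b)
    (hnopole : ∀ z : ℂ, (Q.map (algebraMap ℝ ℂ)).IsRoot z →
      ‖z‖ ≤ (q : ℝ) ^ (-A) → z = (((q : ℝ) ^ (-A) : ℝ) : ℂ)) :
    ∃ c C : ℝ, 0 < c ∧ 0 < C ∧ ∃ X₀ : ℝ, ∀ X : ℝ, X₀ ≤ X →
      c * X ^ A * (Real.log X) ^ (b - 1) ≤ ∑ n ∈ Finset.Icc 1 ⌊X⌋₊, a n ∧
      ∑ n ∈ Finset.Icc 1 ⌊X⌋₊, a n ≤ C * X ^ A * (Real.log X) ^ (b - 1) := by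
  obtain ⟨k, rfl⟩ : ∃ k, b = k + 1 := ⟨b - 1, by omega⟩
  have hqR : (1:ℝ) < (q:ℝ) := by exact_mod_cast hq.trans_lt' one_lt_two
  have hqR0 : (0:ℝ) < (q:ℝ) := by linarith
  set t0 : ℝ := (q:ℝ) ^ (-A) with ht0def
  set u : ℝ := (q:ℝ) ^ A with hudef
  have ht0pos : 0 < t0 := Real.rpow_pos_of_pos hqR0 _
  have ht0lt1 : t0 < 1 := Real.rpow_lt_one_of_one_lt_of_neg hqR (by linarith)
  have hupos : 0 < u := Real.rpow_pos_of_pos hqR0 _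
  have htu : t0 * u = 1 := by
    rw [ht0def, hudef, ← Real.rpow_add hqR0]
    simp
  have hu1 : 1 < u := by nlinarith
  have hQne : Q ≠ 0 := fun h => hQ0 (by simp [h])
  have hinj : Function.Injective (algebraMap ℝ ℂ) := (algebraMap ℝ ℂ).injective
  have hQcne : Q.map (algebraMap ℝ ℂ) ≠ 0 := (Polynomial.map_ne_zero_iff hinj).2 hQne
  -- t0 is a root of Q
  have hevalmap : ∀ (p : Polynomial ℝ) (x : ℝ),
      (p.map (algebraMap ℝ ℂ)).eval (algebraMap ℝ ℂ x) = algebraMap ℝ ℂ (p.eval x) := by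
    intro p x
    rw [Polynomial.eval_map, Polynomial.eval₂_at_apply]
  have hQcRoot : (Q.map (algebraMap ℝ ℂ)).IsRoot ((t0 : ℝ) : ℂ) := by
    have : 0 < Polynomial.rootMultiplicity ((t0:ℝ):ℂ) (Q.map (algebraMap ℝ ℂ)) := by
      rw [hpole]; omega
    exact (Polynomial.rootMultiplicity_pos hQcne).1 this
  have hQt0 : Q.eval t0 = 0 := by
    have h := hQcRoot
    rw [Polynomial.IsRoot] at h
    have h2 : (algebraMap ℝ ℂ) (Q.eval t0) = 0 := by
      rw [← hevalmap]; exact h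
    exact hinj (by simpa using h2)
  -- factor out the root over ℝ
  set m := Polynomial.rootMultiplicity t0 Q with hmdef
  set Q2 := Q /ₘ (Polynomial.X - Polynomial.C t0) ^ m with hQ2def
  have hQfac : (Polynomial.X - Polynomial.C t0) ^ m * Q2 = Q :=
    Q.pow_mul_divByMonic_rootMultiplicity_eq t0
  have hQ2t0 : Q2.eval t0 ≠ 0 :=
    Polynomial.eval_divByMonic_pow_rootMultiplicity_ne_zero t0 hQne
  have hQ2ne : Q2 ≠ 0 := fun h => hQ2t0 (by simp [h])
  have hQ2cne : Q2.map (algebraMap ℝ ℂ) ≠ 0 := (Polynomial.map_ne_zero_iff hinj).2 hQ2ne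
  have hQ2ct0 : ¬ (Q2.map (algebraMap ℝ ℂ)).IsRoot ((t0:ℝ):ℂ) := by
    rw [Polynomial.IsRoot]
    rw [show ((t0:ℝ):ℂ) = algebraMap ℝ ℂ t0 from rfl, hevalmap]
    simpa using fun h => hQ2t0 (hinj (by simpa using h))
  have hmb : m = k + 1 := by
    have hmap : Q.map (algebraMap ℝ ℂ) =
        (Polynomial.X - Polynomial.C ((t0:ℝ):ℂ)) ^ m * Q2.map (algebraMap ℝ ℂ) := by
      conv_lhs => rw [← hQfac]
      rw [Polynomial.map_mul, Polynomial.map_pow, Polynomial.map_sub, Polynomial.map_X,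
        Polynomial.map_C]
      rfl
    rw [hmap] at hpole
    rw [Polynomial.rootMultiplicity_mul (by rw [← hmap]; exact hQcne)] at hpole
    rw [Polynomial.rootMultiplicity_X_sub_C_pow,
      Polynomial.rootMultiplicity_eq_zero hQ2ct0] at hpole
    omega
  -- Q1 with sign fixed
  set Q1 : Polynomial ℝ := (-1) ^ (k+1) * Q2 with hQ1def
  have hfac : (Polynomial.C t0 - Polynomial.X) ^ (k+1) * Q1 = Q := by
    rw [hQ1def]
    calc (Polynomial.C t0 - Polynomial.X) ^ (k+1) * ((-1) ^ (k+1) * Q2)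
        = ((-1) * (Polynomial.C t0 - Polynomial.X)) ^ (k+1) * Q2 := by
          rw [mul_pow]; ring
      _ = (Polynomial.X - Polynomial.C t0) ^ (k+1) * Q2 := by
          rw [neg_one_mul, neg_sub]
      _ = Q := by rw [← hmb] at *; exact hQfac
  have hQ1ne : Q1 ≠ 0 := by
    rw [hQ1def]
    exact mul_ne_zero (pow_ne_zero _ (by simpa using Polynomial.C_ne_zero.2 (by norm_num : (-1:ℝ) ≠ 0))) hQ2ne
  have hQ1t0 : Q1.eval t0 ≠ 0 := by
    rw [hQ1def]
    simp only [Polynomial.eval_mul, Polynomial.eval_pow]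
    intro h
    rcases mul_eq_zero.1 h with h | h
    · exact absurd h (pow_ne_zero _ (by simp))
    · exact hQ2t0 h
    -- roots of Q1 over ℂ are строго outside |z| ≤ t0
  have hQ1cne : Q1.map (algebraMap ℝ ℂ) ≠ 0 := (Polynomial.map_ne_zero_iff hinj).2 hQ1ne
  have hQ1ct0 : ¬ (Q1.map (algebraMap ℝ ℂ)).IsRoot ((t0:ℝ):ℂ) := by
    rw [Polynomial.IsRoot, show ((t0:ℝ):ℂ) = algebraMap ℝ ℂ t0 from rfl, hevalmap]
    exact fun h => hQ1t0 (hinj (by simpa using h))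
  have hQ1roots : ∀ z ∈ (Q1.map (algebraMap ℝ ℂ)).roots, t0 < ‖z‖ := by
    intro z hz
    have hzroot : (Q1.map (algebraMap ℝ ℂ)).IsRoot z :=
      (Polynomial.mem_roots hQ1cne).1 hz
    have hQroot : (Q.map (algebraMap ℝ ℂ)).IsRoot z := by
      have hmap : Q.map (algebraMap ℝ ℂ) =
          ((Polynomial.C t0 - Polynomial.X) ^ (k+1) * Q1).map (algebraMap ℝ ℂ) := by
        rw [hfac]
      rw [hmap, Polynomial.map_mul, Polynomial.IsRoot, Polynomial.eval_mul]
      rw [Polynomial.IsRoot] at hzroot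
      rw [hzroot, mul_zero]
    by_contra hnlt
    push_neg at hnlt
    have := hnopole z hQroot hnlt
    rw [this] at hzroot
    exact hQ1ct0 hzroot
  obtain ⟨ρ0, hρ0t, hρ0⟩ := exists_root_lb t0 _ hQ1roots
  set ρ1 := (t0 + ρ0) / 2 with hρ1def
  have hρ1pos : 0 < ρ1 := by rw [hρ1def]; linarith
  have hρ12 : ρ1 < ρ0 := by rw [hρ1def]; linarith
  have ht0ρ1 : t0 < ρ1 := by rw [hρ1def]; linarith
  -- the series g
  set g : PowerSeries ℝ :=
    (PowerSeries.mk fun r => a (q ^ r)) * (PowerSeries.C t0 - PowerSeries.X) ^ (k+1)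
    with hgdef
  have hcoe : ((Polynomial.C t0 - Polynomial.X : Polynomial ℝ) : PowerSeries ℝ) =
      PowerSeries.C t0 - PowerSeries.X := by push_cast; ring
  have hgQ1 : g * (Q1 : PowerSeries ℝ) = (P : PowerSeries ℝ) := by
    calc g * (Q1 : PowerSeries ℝ)
        = (PowerSeries.mk fun r => a (q ^ r)) *
          ((((Polynomial.C t0 - Polynomial.X) ^ (k+1) : Polynomial ℝ) : PowerSeries ℝ) *
            (Q1 : PowerSeries ℝ)) := by
          rw [hgdef, Polynomial.coe_pow, hcoe]; ring
      _ = (PowerSeries.mk fun r => a (q ^ r)) * (Q : PowerSeries ℝ) := by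
          rw [← Polynomial.coe_mul, hfac]
      _ = (P : PowerSeries ℝ) := hrat
  obtain ⟨Mg, hMg, hgb⟩ := g_bound hQ1ne hρ1pos hρ12 hρ0 hgQ1
  -- the weights w
  set w : ℕ → ℝ := fun j => (PowerSeries.coeff j) g * t0 ^ j with hwdef
  set θ := t0 / ρ1 with hθdef
  have hθ0 : 0 ≤ θ := by positivity
  have hθ1 : θ < 1 := (div_lt_one hρ1pos).2 ht0ρ1
  have hwb : ∀ j, |w j| ≤ Mg * θ ^ j := by
    intro j
    simp only [hwdef]
    calc |(PowerSeries.coeff j) g * t0 ^ j| = |(PowerSeries.coeff j) g| * t0 ^ j := by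
          rw [abs_mul, abs_of_nonneg (pow_nonneg ht0pos.le j)]
      _ ≤ (Mg * ρ1⁻¹ ^ j) * t0 ^ j := mul_le_mul_of_nonneg_right (hgb j) (by positivity)
      _ = Mg * θ ^ j := by rw [hθdef, div_pow, mul_assoc]; congr 1; field_simp; rw [← mul_pow, one_div, inv_mul_cancel₀ hρ1pos.ne', one_pow]
  have hwsum : Summable w := by
    refine Summable.of_norm_bounded
      (((summable_geometric_of_lt_one hθ0 hθ1).mul_left Mg)) fun j => ?_
    simpa [Real.norm_eq_abs] using hwb j
  set G := ∑' j, w j with hGdef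
  -- coefficient identity
  have hbinv : (PowerSeries.C t0 - PowerSeries.X) ^ (k+1) * (binv u) ^ (k+1) = 1 := by
    rw [← mul_pow, binv_mul htu, one_pow]
  have hmka : (PowerSeries.mk fun r => a (q ^ r)) = g * (binv u) ^ (k+1) := by
    calc (PowerSeries.mk fun r => a (q ^ r))
        = (PowerSeries.mk fun r => a (q ^ r)) *
            ((PowerSeries.C t0 - PowerSeries.X) ^ (k+1) * (binv u) ^ (k+1)) := by
          rw [hbinv, mul_one]
      _ = g * (binv u) ^ (k+1) := by rw [hgdef]; ring
  have hcoeff : ∀ r : ℕ, a (q ^ r) = ∑ j ∈ range (r+1),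
      (PowerSeries.coeff j) g * (((r - j + k).choose k : ℝ) * u ^ ((r - j) + (k+1))) := by
    intro r
    have h := congrArg (PowerSeries.coeff r) hmka
    rw [PowerSeries.coeff_mk, PowerSeries.coeff_mul,
      Finset.Nat.sum_antidiagonal_eq_sum_range_succ_mk] at h
    rw [h]
    refine Finset.sum_congr rfl fun j hj => ?_
    rw [coeff_binv_pow]
  have hnorm : ∀ r : ℕ, a (q ^ r) * t0 ^ (r + (k+1)) =
      ∑ j ∈ range (r+1), w j * (((r - j) + k).choose k : ℝ) := by
    intro r
    rw [hcoeff r, Finset.sum_mul]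
    refine Finset.sum_congr rfl fun j hj => ?_
    have hjr : j ≤ r := Nat.lt_succ_iff.1 (mem_range.1 hj)
    have hsplitpow : t0 ^ (r + (k+1)) = t0 ^ j * t0 ^ ((r - j) + (k+1)) := by
      rw [← pow_add]; congr 1; omega
    have hcancel : t0 ^ ((r - j) + (k+1)) * u ^ ((r - j) + (k+1)) = 1 := by
      rw [← mul_pow, htu, one_pow]
    simp only [hwdef, hsplitpow]
    linear_combination ((PowerSeries.coeff j) g * (((r - j + k).choose k : ℝ)) * t0 ^ j) *
      hcancel
    -- evaluation: G * Q1.eval t0 = P.eval t0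
  have hfv : ∀ v : ℕ, Summable (fun n : ℕ =>
      (if v ≤ n then (PowerSeries.coeff (n - v)) g * t0 ^ n else 0)) := by
    intro v
    rw [← summable_nat_add_iff v]
    refine (hwsum.mul_left (t0 ^ v)).congr fun m => ?_
    simp only [le_add_iff_nonneg_left, zero_le, if_true, Nat.add_sub_cancel, hwdef]
    rw [pow_add]
    ring
  have hstep1 : ∀ v : ℕ, (∑' n : ℕ,
      (if v ≤ n then (PowerSeries.coeff (n - v)) g * t0 ^ n else 0)) = t0 ^ v * G := by
    intro v
    rw [← Summable.sum_add_tsum_nat_add v (hfv v)]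
    have hz : (∑ i ∈ range v,
        (if v ≤ i then (PowerSeries.coeff (i - v)) g * t0 ^ i else 0)) = 0 := by
      refine Finset.sum_eq_zero fun i hi => ?_
      rw [if_neg]
      exact fun h => absurd (mem_range.1 hi) (not_lt.2 h)
    rw [hz, zero_add]
    have : ∀ m : ℕ, (if v ≤ m + v then (PowerSeries.coeff (m + v - v)) g * t0 ^ (m + v) else 0)
        = t0 ^ v * w m := by
      intro m
      simp only [le_add_iff_nonneg_left, zero_le, if_true, Nat.add_sub_cancel, hwdef]
      rw [pow_add]
      ring
    rw [tsum_congr this, tsum_mul_left, hGdef]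
  have hGeval : G * Q1.eval t0 = P.eval t0 := by
    set D := Q1.natDegree with hDdef
    calc G * Q1.eval t0 = ∑ v ∈ range (D+1), Q1.coeff v * (t0 ^ v * G) := by
          rw [Polynomial.eval_eq_sum_range, Finset.mul_sum]
          refine Finset.sum_congr rfl fun v hv => by ring
      _ = ∑ v ∈ range (D+1), ∑' n : ℕ, Q1.coeff v *
            (if v ≤ n then (PowerSeries.coeff (n - v)) g * t0 ^ n else 0) := by
          refine Finset.sum_congr rfl fun v hv => ?_
          rw [tsum_mul_left, hstep1 v]
      _ = ∑' n : ℕ, ∑ v ∈ range (D+1), Q1.coeff v *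
            (if v ≤ n then (PowerSeries.coeff (n - v)) g * t0 ^ n else 0) :=
          (Summable.tsum_finsetSum fun v hv => (hfv v).mul_left _).symm
      _ = ∑' n : ℕ, P.coeff n * t0 ^ n := by
          refine tsum_congr fun n => ?_
          have h1 : ∑ v ∈ range (D+1), Q1.coeff v *
              (if v ≤ n then (PowerSeries.coeff (n - v)) g * t0 ^ n else 0) =
              ∑ v ∈ range (D+n+2), Q1.coeff v *
              (if v ≤ n then (PowerSeries.coeff (n - v)) g * t0 ^ n else 0) := by
            refine Finset.sum_subset (Finset.range_subset_range.2 (by omega)) fun x hx hnx => ?_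
            have : D < x := by have := Finset.mem_range.not.1 hnx; omega
            rw [Polynomial.coeff_eq_zero_of_natDegree_lt this, zero_mul]
          have h2 : ∑ v ∈ range (n+1), Q1.coeff v * ((PowerSeries.coeff (n - v)) g * t0 ^ n) =
              ∑ v ∈ range (D+n+2), Q1.coeff v *
              (if v ≤ n then (PowerSeries.coeff (n - v)) g * t0 ^ n else 0) := by
            rw [Finset.sum_congr rfl (fun v hv => ?_)]
            · refine Finset.sum_subset (Finset.range_subset_range.2 (by omega)) fun x hx hnx => ?_
              rw [if_neg, mul_zero]
              have := Finset.mem_range.not.1 hnx; omega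
            · rw [if_pos (Nat.lt_succ_iff.1 (mem_range.1 hv))]
          have h3 : P.coeff n = ∑ v ∈ range (n+1),
              Q1.coeff v * (PowerSeries.coeff (n - v)) g := by
            have h := congrArg (PowerSeries.coeff n) hgQ1
            rw [mul_comm] at h
            rw [PowerSeries.coeff_mul, Finset.Nat.sum_antidiagonal_eq_sum_range_succ_mk] at h
            rw [show (P.coeff n) = PowerSeries.coeff n (P : PowerSeries ℝ) by
              rw [Polynomial.coeff_coe], ← h]
            refine Finset.sum_congr rfl fun v hv => ?_
            rw [Polynomial.coeff_coe]
          rw [h1, ← h2, h3, Finset.sum_mul]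
          exact Finset.sum_congr rfl fun v _ => by ring
      _ = ∑ n ∈ range (P.natDegree + 1), P.coeff n * t0 ^ n := by
          refine tsum_eq_sum fun n hn => ?_
          have : P.natDegree < n := by have := Finset.mem_range.not.1 hn; omega
          rw [Polynomial.coeff_eq_zero_of_natDegree_lt this, zero_mul]
      _ = P.eval t0 := (Polynomial.eval_eq_sum_range t0).symm
  have hPt0 : P.eval t0 ≠ 0 := by
    obtain ⟨uu, vv, huv⟩ := hcop
    intro h
    have := congrArg (Polynomial.eval t0) huv
    simp only [Polynomial.eval_add, Polynomial.eval_mul, Polynomial.eval_one, h, hQt0,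
      mul_zero, add_zero, zero_add] at this
    exact absurd this (by norm_num)
  have hGne : G ≠ 0 := by
    intro h
    rw [h, zero_mul] at hGeval
    exact hPt0 hGeval.symm
  -- the limit
  have hT := main_tendsto k w Mg θ hθ0 hθ1 hMg hwb
  have hTa : Filter.Tendsto (fun r : ℕ =>
      a (q ^ r) * t0 ^ (r + (k+1)) / (((r+k).choose k : ℝ))) Filter.atTop (nhds G) := by
    refine hT.congr fun r => ?_
    rw [← hnorm r]
  have hGnonneg : 0 ≤ G := by
    refine ge_of_tendsto hTa (Filter.Eventually.of_forall fun r => ?_)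
    have hch : (0:ℝ) < ((r+k).choose k : ℝ) := by
      exact_mod_cast Nat.choose_pos (by omega)
    have haa := ha (q ^ r)
    positivity
  have hGpos : 0 < G := lt_of_le_of_ne hGnonneg (Ne.symm hGne)
  have hev : ∀ᶠ r in Filter.atTop, G / 2 <
      a (q ^ r) * t0 ^ (r + (k+1)) / (((r+k).choose k : ℝ)) :=
    hTa.eventually (lt_mem_nhds (by linarith : G/2 < G))
  obtain ⟨r0, hr0⟩ := Filter.eventually_atTop.1 hev
  have h1θ : 0 < 1 - θ := by linarith
  have h1t0 : 0 < 1 - t0 := by linarith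
  -- pointwise coefficient upper bound
  have hub : ∀ r : ℕ, a (q ^ r) ≤ (Mg * (1-θ)⁻¹ * u ^ (k+1)) *
      (((r+k).choose k : ℝ) * u ^ r) := by
    intro r
    have hchn : (0:ℝ) ≤ ((r+k).choose k : ℝ) := Nat.cast_nonneg _
    have h1 : a (q ^ r) * t0 ^ (r + (k+1)) ≤ (Mg * (1-θ)⁻¹) * ((r+k).choose k : ℝ) := by
      rw [hnorm r]
      calc ∑ j ∈ range (r+1), w j * (((r - j) + k).choose k : ℝ)
          ≤ ∑ j ∈ range (r+1), (Mg * θ ^ j) * ((r+k).choose k : ℝ) := by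
            refine Finset.sum_le_sum fun j hj => ?_
            have hjr : j ≤ r := Nat.lt_succ_iff.1 (mem_range.1 hj)
            have hmono : (((r - j) + k).choose k : ℝ) ≤ ((r+k).choose k : ℝ) := by
              exact_mod_cast Nat.choose_le_choose k (by omega)
            calc w j * (((r - j) + k).choose k : ℝ)
                ≤ |w j| * (((r - j) + k).choose k : ℝ) :=
                  mul_le_mul_of_nonneg_right (le_abs_self _) (Nat.cast_nonneg _)
              _ ≤ (Mg * θ ^ j) * (((r - j) + k).choose k : ℝ) :=
                  mul_le_mul_of_nonneg_right (hwb j) (Nat.cast_nonneg _)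
              _ ≤ (Mg * θ ^ j) * ((r+k).choose k : ℝ) :=
                  mul_le_mul_of_nonneg_left hmono (by positivity)
        _ = (∑ j ∈ range (r+1), Mg * θ ^ j) * ((r+k).choose k : ℝ) := by
            rw [Finset.sum_mul]
        _ ≤ (Mg * (1-θ)⁻¹) * ((r+k).choose k : ℝ) := by
            refine mul_le_mul_of_nonneg_right ?_ hchn
            rw [← Finset.mul_sum]
            exact mul_le_mul_of_nonneg_left (geom_sum_le_inv hθ0 hθ1 (r+1)) hMg.le
    have h2 : t0 ^ (r+(k+1)) * u ^ (r+(k+1)) = 1 := by rw [← mul_pow, htu, one_pow]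
    calc a (q ^ r) = (a (q ^ r) * t0 ^ (r+(k+1))) * u ^ (r+(k+1)) := by
          rw [mul_assoc, h2, mul_one]
      _ ≤ ((Mg * (1-θ)⁻¹) * ((r+k).choose k : ℝ)) * u ^ (r+(k+1)) :=
          mul_le_mul_of_nonneg_right h1 (by positivity)
      _ = (Mg * (1-θ)⁻¹ * u ^ (k+1)) * (((r+k).choose k : ℝ) * u ^ r) := by
          rw [pow_add]; ring
  -- pointwise lower bound for large r
  have hlb : ∀ r : ℕ, r0 ≤ r → (G/2) * (((r+k).choose k : ℝ) * u ^ r) ≤ a (q ^ r) := by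
    intro r hr
    have h := hr0 r hr
    have hch : (0:ℝ) < ((r+k).choose k : ℝ) := by exact_mod_cast Nat.choose_pos (by omega)
    have h1 : (G/2) * ((r+k).choose k : ℝ) ≤ a (q ^ r) * t0 ^ (r+(k+1)) :=
      le_of_lt ((lt_div_iff₀ hch).1 h)
    have h2 : t0 ^ (r+(k+1)) * u ^ (r+(k+1)) = 1 := by rw [← mul_pow, htu, one_pow]
    have hupow : u ^ r ≤ u ^ (r+(k+1)) := pow_le_pow_right₀ hu1.le (by omega)
    calc (G/2) * (((r+k).choose k : ℝ) * u ^ r)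
        = ((G/2) * ((r+k).choose k : ℝ)) * u ^ r := by ring
      _ ≤ ((G/2) * ((r+k).choose k : ℝ)) * u ^ (r+(k+1)) :=
          mul_le_mul_of_nonneg_left hupow (by positivity)
      _ ≤ (a (q ^ r) * t0 ^ (r+(k+1))) * u ^ (r+(k+1)) :=
          mul_le_mul_of_nonneg_right h1 (by positivity)
      _ = a (q ^ r) * (t0 ^ (r+(k+1)) * u ^ (r+(k+1))) := by ring
      _ = a (q ^ r) := by rw [h2, mul_one]
  -- partial sums
  set T : ℕ → ℝ := fun R => ∑ r ∈ range (R+1), a (q ^ r) with hTdef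
  have hgeoR : ∀ R : ℕ, ∑ r ∈ range (R+1), u ^ r ≤ u ^ R * (1-t0)⁻¹ := by
    intro R
    have he : ∀ r ∈ range (R+1), u ^ r = u ^ R * t0 ^ (R - r) := by
      intro r hr
      have hrR : r ≤ R := Nat.lt_succ_iff.1 (mem_range.1 hr)
      have h2 : u ^ R = u ^ r * u ^ (R - r) := by rw [← pow_add]; congr 1; omega
      rw [h2, mul_assoc, ← mul_pow, mul_comm u t0, htu, one_pow, mul_one]
    rw [Finset.sum_congr rfl he, ← Finset.mul_sum]
    exact mul_le_mul_of_nonneg_left (sum_pow_sub_le ht0pos.le ht0lt1 R) (by positivity)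
  have hTub : ∀ R : ℕ, T R ≤ (Mg * (1-θ)⁻¹ * u ^ (k+1) * (1-t0)⁻¹) *
      (((R+k).choose k : ℝ) * u ^ R) := by
    intro R
    have hchR : (0:ℝ) ≤ ((R+k).choose k : ℝ) := Nat.cast_nonneg _
    calc T R ≤ ∑ r ∈ range (R+1), (Mg * (1-θ)⁻¹ * u ^ (k+1)) *
          (((r+k).choose k : ℝ) * u ^ r) := Finset.sum_le_sum fun r _ => hub r
      _ ≤ ∑ r ∈ range (R+1), (Mg * (1-θ)⁻¹ * u ^ (k+1)) *
          (((R+k).choose k : ℝ) * u ^ r) := by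
          refine Finset.sum_le_sum fun r hr => ?_
          have hrR : r ≤ R := Nat.lt_succ_iff.1 (mem_range.1 hr)
          have hmono : ((r+k).choose k : ℝ) ≤ ((R+k).choose k : ℝ) := by
            exact_mod_cast Nat.choose_le_choose k (by omega)
          refine mul_le_mul_of_nonneg_left ?_ (by positivity)
          exact mul_le_mul_of_nonneg_right hmono (by positivity)
      _ = (Mg * (1-θ)⁻¹ * u ^ (k+1)) * ((R+k).choose k : ℝ) *
          (∑ r ∈ range (R+1), u ^ r) := by
          rw [← Finset.mul_sum, Finset.mul_sum, Finset.mul_sum]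
          refine Finset.sum_congr rfl fun r _ => by ring
      _ ≤ (Mg * (1-θ)⁻¹ * u ^ (k+1)) * ((R+k).choose k : ℝ) * (u ^ R * (1-t0)⁻¹) := by
          refine mul_le_mul_of_nonneg_left (hgeoR R) (by positivity)
      _ = (Mg * (1-θ)⁻¹ * u ^ (k+1) * (1-t0)⁻¹) * (((R+k).choose k : ℝ) * u ^ R) := by
          ring
  have hTlb : ∀ R : ℕ, r0 ≤ R → (G/2) * (((R+k).choose k : ℝ) * u ^ R) ≤ T R := by
    intro R hR
    refine (hlb R hR).trans ?_
    exact Finset.single_le_sum (f := fun r => a (q ^ r)) (fun i _ => ha _)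
      (Finset.self_mem_range_succ R)
    -- reduce the sum over n ≤ N to T (Nat.log q N)
  have ha1 : a 1 = 0 := by
    refine hsupp 1 ?_
    rintro ⟨r, hr1, hr⟩
    have h2 : q ≤ q ^ r := Nat.le_self_pow (by omega) q
    omega
  have hsum_eq : ∀ N : ℕ, N ≠ 0 → ∑ n ∈ Finset.Icc 1 N, a n = T (Nat.log q N) := by
    intro N hN
    set R := Nat.log q N with hRdef
    have himg : ((Finset.Icc 1 R).image fun r => q ^ r) ⊆ Finset.Icc 1 N := by
      intro x hx
      obtain ⟨r, hr, rfl⟩ := Finset.mem_image.1 hx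
      obtain ⟨hr1, hrR⟩ := Finset.mem_Icc.1 hr
      refine Finset.mem_Icc.2 ⟨Nat.one_le_pow _ _ (by omega), ?_⟩
      calc q ^ r ≤ q ^ R := Nat.pow_le_pow_right (by omega) hrR
        _ ≤ N := Nat.pow_log_le_self q hN
    have h1 : ∑ n ∈ Finset.Icc 1 N, a n = ∑ n ∈ (Finset.Icc 1 R).image (fun r => q ^ r), a n := by
      refine (Finset.sum_subset himg fun x hx hnx => ?_).symm
      refine hsupp x ?_
      rintro ⟨r, hr1, rfl⟩
      apply hnx
      refine Finset.mem_image.2 ⟨r, Finset.mem_Icc.2 ⟨hr1, ?_⟩, rfl⟩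
      exact (Nat.le_log_iff_pow_le (by omega) hN).2 (Finset.mem_Icc.1 hx).2
    have h2 : ∑ n ∈ (Finset.Icc 1 R).image (fun r => q ^ r), a n =
        ∑ r ∈ Finset.Icc 1 R, a (q ^ r) :=
      Finset.sum_image fun x _ y _ hxy => Nat.pow_right_injective hq hxy
    have h3 : T R = ∑ r ∈ Finset.Icc 1 R, a (q ^ r) := by
      simp only [hTdef]
      rw [Finset.range_eq_Ico, Finset.sum_eq_sum_Ico_succ_bot (by omega), pow_zero, ha1,
        zero_add, Finset.Ico_add_one_right_eq_Icc]
    rw [h1, h2, h3]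
  -- rpow facts
  have hqpowA : ∀ n : ℕ, (((q:ℝ)) ^ n) ^ A = u ^ n := by
    intro n
    rw [hudef, ← Real.rpow_natCast (q:ℝ) n, ← Real.rpow_mul hqR0.le, mul_comm,
      Real.rpow_mul hqR0.le, Real.rpow_natCast]
  set lq := Real.log q with hlqdef
  have hlqpos : 0 < lq := Real.log_pos hqR
  set cLow : ℝ := (G/2) / ((k.factorial : ℝ) * (2*lq) ^ k * u) with hcLowdef
  set CT : ℝ := Mg * (1-θ)⁻¹ * u ^ (k+1) * (1-t0)⁻¹ with hCTdef
  set CUp : ℝ := CT * ((k:ℝ)+1) ^ k / lq ^ k with hCUpdef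
  have hfacpos : (0:ℝ) < (k.factorial : ℝ) := by exact_mod_cast k.factorial_pos
  have hDpos : (0:ℝ) < (k.factorial : ℝ) * (2*lq) ^ k * u := by positivity
  have hcLowpos : 0 < cLow := by rw [hcLowdef]; positivity
  have hCTpos : 0 < CT := by rw [hCTdef]; positivity
  have hCUppos : 0 < CUp := by rw [hCUpdef]; positivity
  refine ⟨cLow, CUp, hcLowpos, hCUppos, (q:ℝ) ^ (r0 + 2), fun X hX => ?_⟩
  simp only [Nat.add_sub_cancel]
  -- basic size facts about X
  have hq2X : (2:ℝ) ^ (r0 + 2) ≤ X := le_trans (by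
      exact pow_le_pow_left₀ (by norm_num) (by exact_mod_cast hq) _) hX
  have hX4 : (4:ℝ) ≤ X := by
    refine le_trans ?_ hq2X
    calc (4:ℝ) = 2^2 := by norm_num
      _ ≤ 2 ^ (r0+2) := pow_le_pow_right₀ (by norm_num) (by omega)
  have hX0 : (0:ℝ) < X := by linarith
  have hX1 : (1:ℝ) < X := by linarith
  set N := ⌊X⌋₊ with hNdef
  have hNX : (N:ℝ) ≤ X := Nat.floor_le hX0.le
  have hq_pow_le : q ^ (r0+2) ≤ N := by
    refine Nat.le_floor ?_
    push_cast
    exact hX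
  have hN0 : N ≠ 0 := by
    have : 0 < q ^ (r0+2) := Nat.pow_pos (by omega)
    omega
  set R := Nat.log q N with hRdef
  have hRr : r0 + 2 ≤ R := (Nat.le_log_iff_pow_le (by omega) hN0).2 hq_pow_le
  have hR1 : 1 ≤ R := by omega
  have hRR : (1:ℝ) ≤ (R:ℝ) := by exact_mod_cast hR1
  have hqRX : ((q:ℝ)) ^ R ≤ X := by
    have h1 : q ^ R ≤ N := Nat.pow_log_le_self q hN0
    have h2 : ((q:ℝ)) ^ R ≤ (N:ℝ) := by exact_mod_cast h1
    linarith
  have hXup : X < ((q:ℝ)) ^ (R+1) := by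
    have h1 : X < (N:ℝ) + 1 := Nat.lt_floor_add_one X
    have h2 : N + 1 ≤ q ^ (R+1) := Nat.lt_pow_succ_log_self (by omega) N
    have h3 : ((N:ℝ)) + 1 ≤ ((q:ℝ)) ^ (R+1) := by exact_mod_cast h2
    linarith
  -- logarithm facts
  set L := Real.log X with hLdef
  have hlog1 : (R:ℝ) * lq ≤ L := by
    rw [hLdef, hlqdef, ← Real.log_pow]
    exact Real.log_le_log (by positivity) hqRX
  have hLpos : 0 < L := lt_of_lt_of_le (by positivity) hlog1
  have hlog2 : L ≤ ((R:ℝ)+1) * lq := by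
    rw [hLdef, hlqdef]
    have := Real.log_le_log hX0 hXup.le
    rwa [Real.log_pow, Nat.cast_add, Nat.cast_one] at this
  have hlog3 : L ≤ 2 * (R:ℝ) * lq := by
    refine hlog2.trans ?_
    have h2R : ((R:ℝ)+1) ≤ 2*(R:ℝ) := by linarith
    exact mul_le_mul_of_nonneg_right h2R hlqpos.le
  -- rpow bounds
  have hXA_ge : u ^ R ≤ X ^ A := by
    rw [← hqpowA R]
    exact Real.rpow_le_rpow (by positivity) hqRX hA.le
  have hXA_le : X ^ A ≤ u * u ^ R := by
    have h := Real.rpow_le_rpow hX0.le hXup.le hA.le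
    rw [hqpowA (R+1)] at h
    rwa [pow_succ, mul_comm (u ^ R) u] at h
  have hXA0 : 0 ≤ X ^ A := Real.rpow_nonneg hX0.le _
  -- binomial bounds
  have hchRpos : (0:ℝ) < ((R+k).choose k : ℝ) := by
    exact_mod_cast Nat.choose_pos (by omega)
  have hch_up : ((R+k).choose k : ℝ) ≤ ((k:ℝ)+1) ^ k * (R:ℝ) ^ k := by
    have h1 : (R+k).choose k ≤ ((k+1) * R) ^ k := by
      calc (R+k).choose k ≤ (R+k) ^ k := choose_le_pow' k R
        _ ≤ ((k+1) * R) ^ k := by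
            refine Nat.pow_le_pow_left ?_ k
            calc R + k = k * 1 + R := by ring
              _ ≤ k * R + R := Nat.add_le_add_right (Nat.mul_le_mul_left k hR1) R
              _ = (k+1) * R := by ring
    calc ((R+k).choose k : ℝ) ≤ (((k+1) * R : ℕ) : ℝ) ^ k := by exact_mod_cast h1
      _ = ((k:ℝ)+1) ^ k * (R:ℝ) ^ k := by push_cast; rw [mul_pow]
  have hch_low : (R:ℝ) ^ k ≤ (k.factorial : ℝ) * ((R+k).choose k : ℝ) := by
    exact_mod_cast pow_le_fact_mul_choose k R
  -- rewrite goal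
  rw [hsum_eq N hN0, ← hRdef]
  constructor
  · -- lower bound
    have hT1 := hTlb R (by omega)
    have hLk : L ^ k ≤ (2*lq) ^ k * (R:ℝ) ^ k := by
      rw [← mul_pow]
      exact pow_le_pow_left₀ hLpos.le (by linarith) k
    have e1 : X ^ A * L ^ k ≤ ((k.factorial : ℝ) * (2*lq) ^ k * u) *
        (((R+k).choose k : ℝ) * u ^ R) := by
      calc X ^ A * L ^ k ≤ (u * u ^ R) * ((2*lq) ^ k * (R:ℝ) ^ k) :=
            mul_le_mul hXA_le hLk (by positivity) (by positivity)
        _ ≤ (u * u ^ R) * ((2*lq) ^ k * ((k.factorial : ℝ) * ((R+k).choose k : ℝ))) := by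
            refine mul_le_mul_of_nonneg_left ?_ (by positivity)
            exact mul_le_mul_of_nonneg_left hch_low (by positivity)
        _ = ((k.factorial : ℝ) * (2*lq) ^ k * u) * (((R+k).choose k : ℝ) * u ^ R) := by ring
    calc cLow * X ^ A * L ^ k = cLow * (X ^ A * L ^ k) := by ring
      _ ≤ cLow * (((k.factorial : ℝ) * (2*lq) ^ k * u) * (((R+k).choose k : ℝ) * u ^ R)) :=
          mul_le_mul_of_nonneg_left e1 hcLowpos.le
      _ = (G/2) * (((R+k).choose k : ℝ) * u ^ R) := by
          have hcc : cLow * ((k.factorial : ℝ) * (2*lq) ^ k * u) = G/2 := by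
            rw [hcLowdef]
            exact div_mul_cancel₀ _ hDpos.ne'
          calc cLow * (((k.factorial : ℝ) * (2*lq) ^ k * u) * (((R+k).choose k : ℝ) * u ^ R))
              = (cLow * ((k.factorial : ℝ) * (2*lq) ^ k * u)) * (((R+k).choose k : ℝ) * u ^ R) := by
                ring
            _ = (G/2) * (((R+k).choose k : ℝ) * u ^ R) := by rw [hcc]
      _ ≤ T R := hT1
  · -- upper bound
    have hT2 := hTub R
    have hRk : (R:ℝ) ^ k ≤ L ^ k / lq ^ k := by
      rw [← div_pow]
      refine pow_le_pow_left₀ (by positivity) ?_ k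
      rw [le_div_iff₀ hlqpos]
      exact hlog1
    calc T R ≤ CT * (((R+k).choose k : ℝ) * u ^ R) := hT2
      _ ≤ CT * ((((k:ℝ)+1) ^ k * (R:ℝ) ^ k) * X ^ A) := by
          refine mul_le_mul_of_nonneg_left ?_ hCTpos.le
          exact mul_le_mul hch_up hXA_ge (by positivity) (by positivity)
      _ ≤ CT * ((((k:ℝ)+1) ^ k * (L ^ k / lq ^ k)) * X ^ A) := by
          refine mul_le_mul_of_nonneg_left ?_ hCTpos.le
          refine mul_le_mul_of_nonneg_right ?_ hXA0
          exact mul_le_mul_of_nonneg_left hRk (by positivity)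
      _ = CUp * X ^ A * L ^ k := by
          rw [hCUpdef]
          ring
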